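/- Let w ≤ 0. Then the map P^∞_{−∞} → P^∞_{−w} of stunted projective spectra is null-homotopic, and consequently there is a 2-adic equivalence P^{−w−1}_{−∞} ≃ S^{−1} ∨ Σ^{−1}P^∞_{−w}. -/

import Mathlib

open CategoryTheory Pretriangulated Limits

/-!
Statement 5.  Everything is 2-completed.  Let `w ≤ 0`.  Then the map
`P^∞_{−∞} → P^∞_{−w}` of stunted projective spectra is null-homotopic, and
consequently there is an equivalence
`P^{−w−1}_{−∞} ≃ S^{−1} ∨ Σ^{−1}P^∞_{−w}`.

Encoding: `Sp` is the (triangulated) homotopy category of 2-complete spectra.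
`Pneg b = P^b_{−∞}`, `Ptot = P^∞_{−∞}`, `Pinf w = P^∞_{−w}`, `Sm1 = S^{−1}`.
The fiber sequence `P^{−w−1}_{−∞} → P^∞_{−∞} → P^∞_{−w}` is encoded as a
distinguished triangle; Lin's theorem gives `S^{−1} ≅ P^∞_{−∞}`; since
`P^∞_{−w}` is `0`-connective for `w ≤ 0`, it has `π_{−1} = 0`, i.e. every map
`S^{−1} ⟶ P^∞_{−w}` is null.  The wedge is the coproduct and `Σ^{−1}` is the
shift by `−1`.
-/
theorem statement_5 (Sp : Type*) [Category Sp] [Preadditive Sp]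
    [HasZeroObject Sp] [HasShift Sp ℤ]
    [∀ n : ℤ, (shiftFunctor Sp n).Additive] [Pretriangulated Sp]
    [HasBinaryCoproducts Sp]
    (Pneg : ℤ → Sp) (Ptot : Sp) (Pinf : ℤ → Sp) (Sm1 : Sp)
    (ι : ∀ w : ℤ, Pneg (-w - 1) ⟶ Ptot) (p : ∀ w : ℤ, Ptot ⟶ Pinf w)
    (δ : ∀ w : ℤ, Pinf w ⟶ (Pneg (-w - 1))⟦(1 : ℤ)⟧)
    (htriangle : ∀ w : ℤ, Triangle.mk (ι w) (p w) (δ w) ∈ distTriang Sp)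
    (hLin : Nonempty (Sm1 ≅ Ptot))
    (hconn : ∀ w : ℤ, w ≤ 0 → ∀ f : Sm1 ⟶ Pinf w, f = 0) :
    ∀ w : ℤ, w ≤ 0 →
      p w = 0 ∧
      Nonempty (Pneg (-w - 1) ≅ (Sm1 ⨿ (Pinf w)⟦(-1 : ℤ)⟧)) := by
  intro w hw
  have e := hLin.some
  have hp : p w = 0 := by
    have : e.hom ≫ p w = 0 := hconn w hw _
    rw [← Iso.inv_hom_id_assoc e (p w), this, comp_zero]
  refine ⟨hp, ?_⟩
  have hT := inv_rot_of_distTriang _ (htriangle w)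
  have hzero : ((Triangle.mk (ι w) (p w) (δ w)).invRotate).mor₃ = 0 := by
    dsimp [Triangle.invRotate]
    rw [hp]; exact zero_comp
  obtain ⟨eb, -, -⟩ := exists_iso_binaryBiproduct_of_distTriang _ hT hzero
  exact ⟨eb ≪≫ (biprod.braiding _ _) ≪≫
    biprod.mapIso (Iso.refl Ptot) (Iso.refl _) ≪≫
    biprod.mapIso e.symm (Iso.refl _) ≪≫ biprod.isoCoprod _ _⟩
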